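/- Let d, K ≥ 1 be natural numbers, let G_w, G_x > 0 and β ≥ 0 be reals, and let x_k, w_k ∈ ℝ^d for k ∈ {1,…,K} satisfy ‖w_k‖₂ ≤ G_w and ‖x_k‖₂ ≤ G_x for all k. Suppose that ∑_{j=1}^{k} (x_jᵀ w_k)² ≤ β for all k ∈ {1,…,K}. Then for every λ > 0, ∑_{k=1}^{K} |x_kᵀ w_k| ≤ √((λ + β) · d · K · log(1 + G_w² G_x² K / (d λ))). -/

import Mathlib

set_option linter.unusedSectionVars false
set_option maxHeartbeats 1000000

open Matrix Finset

section AuxIndexChange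

variable {n : Type*} [Fintype n] [DecidableEq n]

lemma aux_outer_psd (v : n → ℝ) : (vecMulVec v v).PosSemidef := by
  have h := Matrix.posSemidef_conjTranspose_mul_self (Matrix.replicateRow Unit v)
  have : (Matrix.replicateRow Unit v)ᴴ * Matrix.replicateRow Unit v = vecMulVec v v := by
    rw [vecMulVec_eq Unit, Matrix.conjTranspose_replicateRow]
    simp
  rwa [this] at h

lemma aux_outer_mulVec (v u : n → ℝ) : vecMulVec v v *ᵥ u = (v ⬝ᵥ u) • v := by
  funext i
  simp [vecMulVec, Matrix.mulVec, dotProduct, Finset.mul_sum, mul_assoc, mul_comm,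
    mul_left_comm]

lemma aux_quad_outer (v u : n → ℝ) : u ⬝ᵥ vecMulVec v v *ᵥ u = (v ⬝ᵥ u) ^ 2 := by
  rw [aux_outer_mulVec, dotProduct_smul, smul_eq_mul, dotProduct_comm, sq]

lemma aux_trace_outer (v : n → ℝ) : (vecMulVec v v).trace = v ⬝ᵥ v := by
  simp [Matrix.trace, vecMulVec, Matrix.diag, dotProduct]

lemma aux_psd_nonneg {M : Matrix n n ℝ} (h : M.PosSemidef) (v : n → ℝ) :
    0 ≤ v ⬝ᵥ M *ᵥ v := by simpa using h.dotProduct_mulVec_nonneg v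

lemma aux_quad_sum {ι : Type*} (s : Finset ι) (M : ι → Matrix n n ℝ) (v : n → ℝ) :
    v ⬝ᵥ (∑ j ∈ s, M j) *ᵥ v = ∑ j ∈ s, v ⬝ᵥ M j *ᵥ v := by
  induction s using Finset.cons_induction with
  | empty => simp
  | cons a s ha ih => simp [Finset.sum_cons, Matrix.add_mulVec, ih]

lemma aux_psd_sum {ι : Type*} (s : Finset ι) (M : ι → Matrix n n ℝ)
    (h : ∀ i ∈ s, (M i).PosSemidef) : (∑ i ∈ s, M i).PosSemidef := by
  induction s using Finset.cons_induction with
  | empty => simpa using Matrix.PosSemidef.zero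
  | cons a s ha ih =>
      rw [Finset.sum_cons]
      exact (h a (Finset.mem_cons_self a s)).add
        (ih fun i hi => h i (Finset.mem_cons_of_mem hi))

lemma aux_cs_form {V : Matrix n n ℝ} (hV : V.PosSemidef) (a b : n → ℝ) :
    (a ⬝ᵥ V *ᵥ b) ^ 2 ≤ (a ⬝ᵥ V *ᵥ a) * (b ⬝ᵥ V *ᵥ b) := by
  obtain ⟨S, hh, hS⟩ : ∃ S : Matrix n n ℝ, Sᵀ = S ∧ S * S = V := by
    open scoped MatrixOrder in
    exact ⟨CFC.sqrt V, by
      have := (CFC.sqrt_nonneg V).posSemidef.1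
      simpa [Matrix.IsHermitian] using this, CFC.sqrt_mul_sqrt_self V hV.nonneg⟩
  have key : ∀ u v : n → ℝ, u ⬝ᵥ V *ᵥ v = (S *ᵥ u) ⬝ᵥ (S *ᵥ v) := by
    intro u v
    rw [← hS, ← Matrix.mulVec_mulVec, Matrix.dotProduct_mulVec u, ← Matrix.mulVec_transpose, hh]
  rw [key a b, key a a, key b b]
  set p := S *ᵥ a
  set q := S *ᵥ b
  have := Finset.sum_mul_sq_le_sq_mul_sq Finset.univ p q
  simpa [dotProduct, sq] using this

lemma aux_cs_inv {V : Matrix n n ℝ} (hV : V.PosDef) (x w : n → ℝ) :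
    (x ⬝ᵥ w) ^ 2 ≤ (x ⬝ᵥ V⁻¹ *ᵥ x) * (w ⬝ᵥ V *ᵥ w) := by
  have hdet : IsUnit V.det := hV.det_pos.ne'.isUnit
  have hsymm : Vᵀ = V := by simpa [Matrix.IsHermitian] using hV.1
  have hVV : V * V⁻¹ = 1 := Matrix.mul_nonsing_inv V hdet
  have h1 : (V⁻¹ *ᵥ x) ⬝ᵥ V *ᵥ w = x ⬝ᵥ w := by
    rw [Matrix.dotProduct_mulVec, ← Matrix.mulVec_transpose, hsymm,
      Matrix.mulVec_mulVec, hVV, Matrix.one_mulVec]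
  have h2 : (V⁻¹ *ᵥ x) ⬝ᵥ V *ᵥ (V⁻¹ *ᵥ x) = x ⬝ᵥ V⁻¹ *ᵥ x := by
    rw [Matrix.dotProduct_mulVec, ← Matrix.mulVec_transpose, hsymm,
      Matrix.mulVec_mulVec, hVV, Matrix.one_mulVec]
  have := aux_cs_form hV.posSemidef (V⁻¹ *ᵥ x) w
  rwa [h1, h2] at this

lemma aux_det_update {V : Matrix n n ℝ} (hV : V.PosDef) (v : n → ℝ) :
    (V + vecMulVec v v).det = V.det * (1 + v ⬝ᵥ V⁻¹ *ᵥ v) := by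
  have hdet : IsUnit V.det := hV.det_pos.ne'.isUnit
  have hsymm : V⁻¹ᵀ = V⁻¹ := by
    have : Vᵀ = V := by simpa [Matrix.IsHermitian] using hV.1
    rw [Matrix.transpose_nonsing_inv, this]
  rw [vecMulVec_eq Unit, Matrix.det_add_replicateCol_mul_replicateRow hdet]
  congr 1
  rw [Matrix.det_unique, Matrix.add_apply, Matrix.one_apply_eq]
  congr 1
  rw [← Matrix.replicateRow_vecMul, Matrix.replicateRow_mul_replicateCol_apply, ← Matrix.mulVec_transpose, hsymm,
    dotProduct_comm]

lemma aux_quad_update {V : Matrix n n ℝ} (hV : V.PosDef) (v : n → ℝ) :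
    v ⬝ᵥ (V + vecMulVec v v)⁻¹ *ᵥ v
      = (v ⬝ᵥ V⁻¹ *ᵥ v) / (1 + v ⬝ᵥ V⁻¹ *ᵥ v) := by
  set t := v ⬝ᵥ V⁻¹ *ᵥ v with ht
  have hVinv : V⁻¹.PosDef := hV.inv
  have htnn : 0 ≤ t := by
    by_cases hv : v = 0
    · simp [ht, hv]
    · exact (hVinv.dotProduct_mulVec_pos hv).le.trans_eq (by simp [ht])
  have h1t : 0 < 1 + t := by linarith
  have hV' : (V + vecMulVec v v).PosDef := hV.add_posSemidef (aux_outer_psd v)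
  have hdet' : IsUnit (V + vecMulVec v v).det := hV'.det_pos.ne'.isUnit
  have hdet : IsUnit V.det := hV.det_pos.ne'.isUnit
  set u := (V + vecMulVec v v)⁻¹ *ᵥ v with hu
  have h1 : (V + vecMulVec v v) *ᵥ u = v := by
    rw [hu, Matrix.mulVec_mulVec, Matrix.mul_nonsing_inv _ hdet', Matrix.one_mulVec]
  have h2 : V *ᵥ u = (1 - v ⬝ᵥ u) • v := by
    rw [Matrix.add_mulVec, aux_outer_mulVec] at h1
    rw [eq_sub_of_add_eq h1, sub_smul, one_smul]
  have h3 : u = (1 - v ⬝ᵥ u) • (V⁻¹ *ᵥ v) := by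
    have hVV : V⁻¹ * V = 1 := Matrix.nonsing_inv_mul V hdet
    calc u = V⁻¹ *ᵥ (V *ᵥ u) := by rw [Matrix.mulVec_mulVec, hVV, Matrix.one_mulVec]
    _ = (1 - v ⬝ᵥ u) • (V⁻¹ *ᵥ v) := by rw [h2, Matrix.mulVec_smul]
  have h4 : v ⬝ᵥ u = (1 - v ⬝ᵥ u) * t := by
    conv_lhs => rw [h3]
    rw [dotProduct_smul, smul_eq_mul, ht]
  rw [eq_div_iff h1t.ne']
  nlinarith [h4]

lemma aux_div_le_log {t : ℝ} (ht : 0 ≤ t) : t / (1 + t) ≤ Real.log (1 + t) := by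
  have h1 : 0 < 1 + t := by linarith
  have h := Real.log_le_sub_one_of_pos (x := (1 + t)⁻¹) (by positivity)
  rw [Real.log_inv] at h
  have h2 : t / (1 + t) = 1 - (1 + t)⁻¹ := by field_simp; ring
  linarith

lemma aux_trace_eq_sum_eig {A : Matrix n n ℝ} (hA : A.IsHermitian) :
    A.trace = ∑ i, hA.eigenvalues i := by
  simpa using hA.trace_eq_sum_eigenvalues

lemma aux_logdet_le [Nonempty n] {A : Matrix n n ℝ} (hA : A.PosDef) :
    Real.log A.det ≤ (Fintype.card n) * Real.log (A.trace / Fintype.card n) := by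
  set c := (Fintype.card n : ℝ) with hcdef
  have hc : 0 < c := by
    simp only [hcdef]
    exact_mod_cast Fintype.card_pos
  have heig : ∀ i, 0 < hA.1.eigenvalues i := hA.eigenvalues_pos
  have hdet : A.det = ∏ i, hA.1.eigenvalues i := by
    simpa using hA.1.det_eq_prod_eigenvalues
  have htr : A.trace = ∑ i, hA.1.eigenvalues i := aux_trace_eq_sum_eig hA.1
  have hS : 0 < A.trace := by
    rw [htr]; exact Finset.sum_pos (fun i _ => heig i) Finset.univ_nonempty
  have ha : 0 < A.trace / c := div_pos hS hc
  have key : ∀ i, Real.log (hA.1.eigenvalues i) ≤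
      Real.log (A.trace / c) + (hA.1.eigenvalues i - A.trace / c) / (A.trace / c) := by
    intro i
    have h := Real.log_le_sub_one_of_pos (x := hA.1.eigenvalues i / (A.trace / c))
      (div_pos (heig i) ha)
    rw [Real.log_div (heig i).ne' ha.ne'] at h
    have heq : hA.1.eigenvalues i / (A.trace / c) - 1
        = (hA.1.eigenvalues i - A.trace / c) / (A.trace / c) := by
      field_simp
    linarith [heq ▸ h]
  calc Real.log A.det = ∑ i, Real.log (hA.1.eigenvalues i) := by
        rw [hdet, Real.log_prod (fun i _ => (heig i).ne')]
    _ ≤ ∑ i, (Real.log (A.trace / c) + (hA.1.eigenvalues i - A.trace / c) / (A.trace / c)) :=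
        Finset.sum_le_sum (fun i _ => key i)
    _ = c * Real.log (A.trace / c) := by
        rw [Finset.sum_add_distrib, Finset.sum_const, ← Finset.sum_div, Finset.sum_sub_distrib,
          ← htr, Finset.sum_const]
        simp only [nsmul_eq_mul, Finset.card_univ, ← hcdef]
        field_simp
        ring

end AuxIndexChange

theorem index_change_lemma
    (d K : ℕ) (hd : 1 ≤ d) (hK : 1 ≤ K)
    (Gw Gx β : ℝ) (hGw : 0 < Gw) (hGx : 0 < Gx) (hβ : 0 ≤ β)
    (x w : Fin K → Fin d → ℝ)
    (hw : ∀ k : Fin K, Real.sqrt (∑ i, (w k i) ^ 2) ≤ Gw)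
    (hx : ∀ k : Fin K, Real.sqrt (∑ i, (x k i) ^ 2) ≤ Gx)
    (hsum : ∀ k : Fin K, ∑ j ∈ Finset.Iic k, (∑ i, x j i * w k i) ^ 2 ≤ β) :
    ∀ lam : ℝ, 0 < lam →
      ∑ k : Fin K, |∑ i, x k i * w k i| ≤
        Real.sqrt ((lam + β) * d * K *
          Real.log (1 + Gw ^ 2 * Gx ^ 2 * K / (d * lam))) := by
  intro lam hlam
  haveI : Nonempty (Fin d) := ⟨⟨0, hd⟩⟩
  have hdR : (0 : ℝ) < d := by exact_mod_cast hd
  set lam' : ℝ := lam / Gw ^ 2 with hlam'def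
  have hlam' : 0 < lam' := by positivity
  set xx : ℕ → Fin d → ℝ := fun j => if h : j < K then x ⟨j, h⟩ else 0 with hxx
  set W : ℕ → Matrix (Fin d) (Fin d) ℝ :=
    fun m => lam' • (1 : Matrix (Fin d) (Fin d) ℝ) +
      ∑ j ∈ Finset.range m, vecMulVec (xx j) (xx j) with hW
  -- basic facts
  have hWsucc : ∀ m, W (m + 1) = W m + vecMulVec (xx m) (xx m) := by
    intro m
    rw [hW]
    simp only
    rw [Finset.sum_range_succ, add_assoc]
  have hWpd : ∀ m, (W m).PosDef := by
    intro m
    apply Matrix.PosDef.add_posSemidef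
    · rw [Matrix.smul_one_eq_diagonal]
      exact Matrix.posDef_diagonal_iff.mpr fun _ => hlam'
    · exact aux_psd_sum _ _ fun j _ => aux_outer_psd (xx j)
  have hquad : ∀ m (v : Fin d → ℝ),
      v ⬝ᵥ W m *ᵥ v = lam' * (v ⬝ᵥ v) + ∑ j ∈ Finset.range m, (xx j ⬝ᵥ v) ^ 2 := by
    intro m v
    rw [hW]
    simp only
    rw [Matrix.add_mulVec, dotProduct_add, Matrix.smul_mulVec, Matrix.one_mulVec,
      dotProduct_smul, smul_eq_mul, aux_quad_sum]
    congr 1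
    exact Finset.sum_congr rfl fun j _ => aux_quad_outer (xx j) v
  have htrace : ∀ m, (W m).trace = lam' * d + ∑ j ∈ Finset.range m, xx j ⬝ᵥ xx j := by
    intro m
    rw [hW]
    simp only
    rw [Matrix.trace_add, Matrix.trace_smul, Matrix.trace_one, Matrix.trace_sum]
    simp only [smul_eq_mul, Fintype.card_fin, aux_trace_outer]
  have hdet0 : (W 0).det = lam' ^ d := by
    rw [hW]
    simp [Matrix.det_smul]
  -- bounds on norms
  have hxxle : ∀ j, xx j ⬝ᵥ xx j ≤ Gx ^ 2 := by
    intro j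
    rw [hxx]
    by_cases h : j < K
    · simp only [dif_pos h]
      have h1 : (0:ℝ) ≤ ∑ i, (x ⟨j, h⟩ i) ^ 2 := by positivity
      have h2 := hx ⟨j, h⟩
      have h3 : ∑ i, (x ⟨j, h⟩ i) ^ 2 ≤ Gx ^ 2 := by
        have := Real.sq_sqrt h1
        nlinarith [Real.sqrt_nonneg (∑ i, (x ⟨j, h⟩ i) ^ 2)]
      calc (fun i => x ⟨j, h⟩ i) ⬝ᵥ (fun i => x ⟨j, h⟩ i) = ∑ i, (x ⟨j, h⟩ i) ^ 2 := by
            simp [dotProduct, sq]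
        _ ≤ Gx ^ 2 := h3
    · simp [dif_neg h]
      positivity
  have hwwle : ∀ k : Fin K, w k ⬝ᵥ w k ≤ Gw ^ 2 := by
    intro k
    have h1 : (0:ℝ) ≤ ∑ i, (w k i) ^ 2 := by positivity
    have h2 := hw k
    have h3 : ∑ i, (w k i) ^ 2 ≤ Gw ^ 2 := by
      have := Real.sq_sqrt h1
      nlinarith [Real.sqrt_nonneg (∑ i, (w k i) ^ 2)]
    calc w k ⬝ᵥ w k = ∑ i, (w k i) ^ 2 := by simp [dotProduct, sq]
      _ ≤ Gw ^ 2 := h3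
  -- s and t
  set s : ℕ → ℝ := fun m => xx m ⬝ᵥ (W (m + 1))⁻¹ *ᵥ xx m with hs
  set t : ℕ → ℝ := fun m => xx m ⬝ᵥ (W m)⁻¹ *ᵥ xx m with htdef
  have htnn : ∀ m, 0 ≤ t m := fun m =>
    aux_psd_nonneg (hWpd m).inv.posSemidef (xx m)
  have hsnn : ∀ m, 0 ≤ s m := fun m =>
    aux_psd_nonneg (hWpd (m + 1)).inv.posSemidef (xx m)
  have hdetsucc : ∀ m, (W (m + 1)).det = (W m).det * (1 + t m) := by
    intro m
    rw [hWsucc m, aux_det_update (hWpd m)]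
  have hstep : ∀ m, s m ≤ Real.log ((W (m + 1)).det) - Real.log ((W m).det) := by
    intro m
    have h1 : s m = t m / (1 + t m) := by
      rw [hs, htdef]
      simp only
      rw [hWsucc m, aux_quad_update (hWpd m)]
    have h2 : Real.log ((W (m + 1)).det) = Real.log ((W m).det) + Real.log (1 + t m) := by
      rw [hdetsucc m, Real.log_mul (hWpd m).det_pos.ne' (by nlinarith [htnn m])]
    rw [h1, h2]
    have := aux_div_le_log (htnn m)
    linarith
  have htele : ∀ m, ∑ k ∈ Finset.range m, s k ≤
      Real.log ((W m).det) - Real.log ((W 0).det) := by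
    intro m
    induction m with
    | zero => simp
    | succ m ih =>
        rw [Finset.sum_range_succ]
        have := hstep m
        linarith
  -- log det bound
  set T : ℝ := Real.log (1 + Gw ^ 2 * Gx ^ 2 * K / (d * lam)) with hT
  have hKR : (0:ℝ) < K := by exact_mod_cast hK
  have hlogdet : Real.log ((W K).det) - Real.log ((W 0).det) ≤ d * T := by
    have h1 : Real.log ((W K).det) ≤ d * Real.log ((W K).trace / d) := by
      have := aux_logdet_le (hWpd K)
      simpa [Fintype.card_fin] using this
    have htr : (W K).trace ≤ lam' * d + K * Gx ^ 2 := by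
      rw [htrace K]
      have : ∑ j ∈ Finset.range K, xx j ⬝ᵥ xx j ≤ ∑ j ∈ Finset.range K, Gx ^ 2 :=
        Finset.sum_le_sum fun j _ => hxxle j
      simp only [Finset.sum_const, Finset.card_range, nsmul_eq_mul] at this
      linarith
    have hdotnn : ∀ j, 0 ≤ xx j ⬝ᵥ xx j := fun j =>
      Finset.sum_nonneg fun i _ => mul_self_nonneg _
    have htrpos : 0 < (W K).trace / d := by
      rw [htrace K]
      have h4 : 0 ≤ ∑ j ∈ Finset.range K, xx j ⬝ᵥ xx j :=
        Finset.sum_nonneg fun j _ => hdotnn j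
      positivity
    have h2 : Real.log ((W K).trace / d) ≤ Real.log (lam' + K * Gx ^ 2 / d) := by
      apply Real.log_le_log htrpos
      rw [div_le_iff₀ hdR]
      have h5 : (lam' + K * Gx ^ 2 / d) * d = lam' * d + K * Gx ^ 2 := by
        field_simp
      linarith
    have h0 : Real.log ((W 0).det) = d * Real.log lam' := by
      rw [hdet0, Real.log_pow]
    have h3 : Real.log (lam' + K * Gx ^ 2 / d) - Real.log lam' = T := by
      rw [← Real.log_div (by positivity) hlam'.ne', hT]
      congr 1
      rw [hlam'def]
      field_simp
    calc Real.log ((W K).det) - Real.log ((W 0).det)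
        ≤ d * Real.log ((W K).trace / d) - d * Real.log lam' := by
          rw [h0] at *; linarith
      _ = d * (Real.log ((W K).trace / d) - Real.log lam') := by ring
      _ ≤ d * (Real.log (lam' + K * Gx ^ 2 / d) - Real.log lam') :=
          mul_le_mul_of_nonneg_left (by linarith) hdR.le
      _ = d * T := by rw [h3]
  -- key pointwise bound
  have hak : ∀ k : Fin K, (∑ i, x k i * w k i) = xx k.1 ⬝ᵥ w k := by
    intro k
    rw [hxx]
    simp only [dif_pos k.2, Fin.eta]
    rfl
  have hkey2 : ∀ k : Fin K, (xx k.1 ⬝ᵥ w k) ^ 2 ≤ (lam + β) * s k.1 := by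
    intro k
    have hcs := aux_cs_inv (hWpd (k.1 + 1)) (xx k.1) (w k)
    have hb : w k ⬝ᵥ W (k.1 + 1) *ᵥ w k ≤ lam + β := by
      rw [hquad]
      have h1 : lam' * (w k ⬝ᵥ w k) ≤ lam := by
        have := mul_le_mul_of_nonneg_left (hwwle k) hlam'.le
        rw [hlam'def] at this ⊢
        calc lam / Gw ^ 2 * (w k ⬝ᵥ w k) ≤ lam / Gw ^ 2 * Gw ^ 2 := this
          _ = lam := by field_simp
      have hconv : ∑ j ∈ Finset.range (k.1 + 1), (xx j ⬝ᵥ w k) ^ 2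
          = ∑ j ∈ Finset.Iic k, (∑ i, x j i * w k i) ^ 2 := by
        refine Finset.sum_bij' (fun j hj => (⟨j, by
            have := Finset.mem_range.mp hj
            omega⟩ : Fin K)) (fun j _ => j.1) ?_ ?_ ?_ ?_ ?_
        · intro j hj
          have := Finset.mem_range.mp hj
          simp only [Finset.mem_Iic, Fin.le_def]
          omega
        · intro j hj
          have := Finset.mem_Iic.mp hj
          simp only [Finset.mem_range]
          rw [Fin.le_def] at this
          omega
        · intro j hj
          simp
        · intro j hj
          simp
        · intro j hj
          have hjK : j < K := by
            have := Finset.mem_range.mp hj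
            omega
          rw [hxx]
          simp only [dif_pos hjK]
          rfl
      have h2 : ∑ j ∈ Finset.range (k.1 + 1), (xx j ⬝ᵥ w k) ^ 2 ≤ β := by
        rw [hconv]; exact hsum k
      linarith
    calc (xx k.1 ⬝ᵥ w k) ^ 2 ≤ s k.1 * (w k ⬝ᵥ W (k.1 + 1) *ᵥ w k) := hcs
      _ ≤ s k.1 * (lam + β) := mul_le_mul_of_nonneg_left hb (hsnn k.1)
      _ = (lam + β) * s k.1 := by ring
  -- assemble
  have hlamβ : 0 ≤ lam + β := by linarith
  have hsum2 : ∑ k : Fin K, (xx k.1 ⬝ᵥ w k) ^ 2 ≤ (lam + β) * (d * T) := by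
    calc ∑ k : Fin K, (xx k.1 ⬝ᵥ w k) ^ 2 ≤ ∑ k : Fin K, (lam + β) * s k.1 :=
          Finset.sum_le_sum fun k _ => hkey2 k
      _ = (lam + β) * ∑ k : Fin K, s k.1 := by rw [← Finset.mul_sum]
      _ = (lam + β) * ∑ k ∈ Finset.range K, s k := by
          rw [Fin.sum_univ_eq_sum_range]
      _ ≤ (lam + β) * (d * T) := by
          have h6 := (htele K).trans hlogdet
          exact mul_le_mul_of_nonneg_left h6 hlamβ
  have hCS : (∑ k : Fin K, |xx k.1 ⬝ᵥ w k|) ^ 2 ≤ K * ∑ k : Fin K, (xx k.1 ⬝ᵥ w k) ^ 2 := by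
    have h7 := Finset.sum_mul_sq_le_sq_mul_sq Finset.univ (fun _ : Fin K => (1 : ℝ))
      (fun k => |xx k.1 ⬝ᵥ w k|)
    simpa [sq_abs, Finset.card_univ] using h7
  have habs : ∑ k : Fin K, |∑ i, x k i * w k i| = ∑ k : Fin K, |xx k.1 ⬝ᵥ w k| := by
    exact Finset.sum_congr rfl fun k _ => by rw [hak k]
  rw [habs]
  have hnn : 0 ≤ ∑ k : Fin K, |xx k.1 ⬝ᵥ w k| :=
    Finset.sum_nonneg fun k _ => abs_nonneg _
  rw [← Real.sqrt_sq hnn]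
  apply Real.sqrt_le_sqrt
  calc (∑ k : Fin K, |xx k.1 ⬝ᵥ w k|) ^ 2 ≤ K * ∑ k : Fin K, (xx k.1 ⬝ᵥ w k) ^ 2 := hCS
    _ ≤ K * ((lam + β) * (d * T)) := mul_le_mul_of_nonneg_left hsum2 hKR.le
    _ = (lam + β) * d * K * T := by ring
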